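/- arXiv:1708.08967 — 2 statements merged into one kernel-verified Lean document; each statement's English description precedes it below -/
import Mathlib

section
/- If T is a tree on n ≥ 4 vertices, then R⁰_α(T) ≤ (n−1)^α + (n−1) for every real α with α < 0 or α > 1, and R⁰_α(T) ≥ (n−1)^α + (n−1) for every real α with 0 < α < 1; equality holds if and only if T is isomorphic to the star S_n (the tree with one vertex of degree n−1 and n−1 vertices of degree 1). -/
open Finset Real

/-- The degree of a vertex `v` in a graph `G` (number of neighbours). -/
noncomputable def deg {n : ℕ} (G : SimpleGraph (Fin n)) (v : Fin n) : ℕ :=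
  Nat.card (G.neighborSet v)

/-- The zeroth-order general Randć index `R⁰_α(G) = Σ_v (d_v)^α`. -/
noncomputable def R0 {n : ℕ} (G : SimpleGraph (Fin n)) (α : ℝ) : ℝ :=
  ∑ v : Fin n, (deg G v : ℝ) ^ α

/-- The variable sum exdeg index `SEI_a(G) = Σ_v d_v · a^{d_v}`. -/
noncomputable def SEI {n : ℕ} (G : SimpleGraph (Fin n)) (a : ℝ) : ℝ :=
  ∑ v : Fin n, (deg G v : ℝ) * a ^ (deg G v)

/-- The number of vertices of `G` having degree `d`. -/
noncomputable def countDeg {n : ℕ} (G : SimpleGraph (Fin n)) (d : ℕ) : ℕ :=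
  Nat.card {v : Fin n // deg G v = d}

/-- The number of branching vertices (vertices of degree greater than 2) of `G`. -/
noncomputable def branching {n : ℕ} (G : SimpleGraph (Fin n)) : ℕ :=
  Nat.card {v : Fin n // 2 < deg G v}

/-- The star graph on `Fin n`, with centre the vertex with value `0`. -/
def starGraph (n : ℕ) : SimpleGraph (Fin n) :=
  SimpleGraph.fromRel (fun u _ => u.val = 0)

/-! ### Auxiliary lemmas -/

private lemma strictConvexOn_rpow_aux {α : ℝ} (hα : α < 0 ∨ 1 < α) :
    StrictConvexOn ℝ (Set.Ioi (0:ℝ)) (fun x : ℝ ↦ x ^ α) := by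
  apply strictConvexOn_of_deriv2_pos (convex_Ioi 0)
  · intro x hx
    exact (Real.continuousAt_rpow_const x α (Or.inl (ne_of_gt hx))).continuousWithinAt
  · intro x hx
    rw [interior_Ioi] at hx
    have h2 : deriv^[2] (fun x : ℝ ↦ x ^ α) x
        = deriv (fun y : ℝ => α * y ^ (α - 1)) x := by
      simp only [Function.iterate_succ, Function.iterate_zero, Function.comp, id]
      apply Filter.EventuallyEq.deriv_eq
      filter_upwards [Ioi_mem_nhds hx] with y hy
      exact Real.deriv_rpow_const y α
    rw [h2, deriv_const_mul _ (Real.differentiableAt_rpow_const_of_ne _ (ne_of_gt hx)),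
      Real.deriv_rpow_const x (α - 1)]
    have hxp : 0 < x ^ (α - 1 - 1) := Real.rpow_pos_of_pos hx _
    have hcoef : 0 < α * (α - 1) := by rcases hα with h | h <;> nlinarith
    nlinarith [mul_pos hcoef hxp]

private lemma interp {f : ℝ → ℝ} {N : ℝ} (hN : 2 < N)
    (hf : StrictConvexOn ℝ (Set.Icc 1 N) f) {x : ℝ} (hx1 : 1 ≤ x) (hxN : x ≤ N) :
    f x ≤ ((N - x) * f 1 + (x - 1) * f N) / (N - 1) ∧
    (x ≠ 1 → x ≠ N → f x < ((N - x) * f 1 + (x - 1) * f N) / (N - 1)) := by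
  have hden : (0:ℝ) < N - 1 := by linarith
  have h1m : (1:ℝ) ∈ Set.Icc 1 N := ⟨le_refl _, by linarith⟩
  have hNm : N ∈ Set.Icc (1:ℝ) N := ⟨by linarith, le_refl _⟩
  have ha : 0 ≤ (N - x)/(N-1) := div_nonneg (by linarith) (by linarith)
  have hb : 0 ≤ (x - 1)/(N-1) := div_nonneg (by linarith) (by linarith)
  have hab : (N - x)/(N-1) + (x - 1)/(N-1) = 1 := by field_simp; ring
  have hxe : ((N - x)/(N-1)) • (1:ℝ) + ((x - 1)/(N-1)) • N = x := by
    simp only [smul_eq_mul]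
    rw [div_mul_eq_mul_div, div_mul_eq_mul_div, ← add_div,
      div_eq_iff (by linarith : N - 1 ≠ 0)]
    ring
  have hval : ((N - x)/(N-1)) • f 1 + ((x - 1)/(N-1)) • f N
      = ((N - x) * f 1 + (x - 1) * f N) / (N - 1) := by
    simp only [smul_eq_mul]
    rw [div_mul_eq_mul_div, div_mul_eq_mul_div, ← add_div]
  constructor
  · have := hf.convexOn.2 h1m hNm ha hb hab
    rw [hxe, hval] at this
    exact this
  · intro hne1 hneN
    have ha' : 0 < (N - x)/(N-1) := by
      have : x < N := lt_of_le_of_ne hxN hneN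
      apply div_pos <;> linarith
    have hb' : 0 < (x - 1)/(N-1) := by
      have : 1 < x := lt_of_le_of_ne hx1 (Ne.symm hne1)
      apply div_pos <;> linarith
    have := hf.2 h1m hNm (by linarith : (1:ℝ) ≠ N) ha' hb' hab
    rw [hxe, hval] at this
    exact this

private lemma deg_eq_degree {n : ℕ} (G : SimpleGraph (Fin n)) [DecidableRel G.Adj] (v : Fin n) :
    deg G v = G.degree v := by
  rw [deg, Nat.card_eq_fintype_card, SimpleGraph.card_neighborSet_eq_degree]

private lemma deg_facts {n : ℕ} (hn : 4 ≤ n) (T : SimpleGraph (Fin n)) (hT : T.IsTree) :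
    (∀ v, 1 ≤ deg T v) ∧ (∀ v, deg T v ≤ n - 1) ∧ (∑ v, deg T v = 2 * (n - 1)) := by
  classical
  refine ⟨?_, ?_, ?_⟩
  · intro v
    rw [deg_eq_degree]
    rw [Nat.one_le_iff_ne_zero, ← Nat.pos_iff_ne_zero, SimpleGraph.degree_pos_iff_exists_adj]
    obtain ⟨w, hw⟩ := Fintype.exists_ne_of_one_lt_card (by simp [Fintype.card_fin]; omega) v
    obtain ⟨p⟩ := hT.isConnected.preconnected v w
    cases p with
    | nil => exact absurd rfl hw.symm
    | cons h q => exact ⟨_, h⟩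
  · intro v
    rw [deg_eq_degree]
    have := T.degree_lt_card_verts v
    simp [Fintype.card_fin] at this
    omega
  · have h1 : ∑ v, T.degree v = 2 * T.edgeFinset.card :=
      SimpleGraph.sum_degrees_eq_twice_card_edges T
    have h2 : T.edgeFinset.card + 1 = n := by
      have := hT.card_edgeFinset
      simpa [Fintype.card_fin] using this
    simp only [deg_eq_degree]
    rw [h1]
    omega

private lemma star_adj {n : ℕ} (a b : Fin n) :
    (starGraph n).Adj a b ↔ a ≠ b ∧ (a.val = 0 ∨ b.val = 0) := by
  simp [starGraph, SimpleGraph.fromRel_adj]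

private lemma star_deg {n : ℕ} (hn : 4 ≤ n) (w : Fin n) :
    deg (starGraph n) w = if w.val = 0 then n - 1 else 1 := by
  classical
  rw [deg_eq_degree, SimpleGraph.degree]
  split
  · next h =>
    have : (starGraph n).neighborFinset w = univ.erase w := by
      ext u
      simp [SimpleGraph.mem_neighborFinset, star_adj, h, eq_comm, Ne, and_comm]
    rw [this, card_erase_of_mem (mem_univ _), card_univ, Fintype.card_fin]
  · next h =>
    have hz : (⟨0, by omega⟩ : Fin n) ≠ w := by
      intro he
      apply h
      rw [← he]
    have : (starGraph n).neighborFinset w = {⟨0, by omega⟩} := by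
      ext u
      simp only [SimpleGraph.mem_neighborFinset, star_adj, mem_singleton]
      constructor
      · rintro ⟨hne, h0 | h0⟩
        · exact absurd h0 h
        · exact Fin.ext h0
      · rintro rfl
        exact ⟨hz.symm ∘ Eq.symm ∘ Eq.symm, Or.inr rfl⟩
    rw [this, card_singleton]

private lemma center_unique {n : ℕ} (hn : 4 ≤ n) (d : Fin n → ℕ) (hd1 : ∀ v, 1 ≤ d v)
    (hsum : ∑ v, d v = 2 * (n - 1)) (hcond : ∀ v, d v = 1 ∨ d v = n - 1) :
    ∃ c, d c = n - 1 ∧ ∀ u, u ≠ c → d u = 1 := by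
  have hex : ∃ c, d c = n - 1 := by
    by_contra hno
    push_neg at hno
    have hall : ∀ v, d v = 1 := fun v => (hcond v).resolve_right (hno v)
    have : ∑ v : Fin n, d v = n := by simp [hall, Fintype.card_fin]
    omega
  obtain ⟨c, hc⟩ := hex
  refine ⟨c, hc, ?_⟩
  intro u hu
  rcases hcond u with h | h
  · exact h
  · exfalso
    have e1 : d c + ∑ v ∈ univ.erase c, d v = ∑ v, d v :=
      Finset.add_sum_erase _ _ (mem_univ c)
    have hmem : u ∈ univ.erase c := mem_erase.2 ⟨hu, mem_univ u⟩
    have e2 : d u + ∑ v ∈ (univ.erase c).erase u, d v = ∑ v ∈ univ.erase c, d v :=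
      Finset.add_sum_erase _ _ hmem
    have e3 : ((univ.erase c).erase u).card • 1 ≤ ∑ v ∈ (univ.erase c).erase u, d v :=
      Finset.card_nsmul_le_sum _ _ _ (fun v _ => hd1 v)
    have e4 : ((univ.erase c).erase u).card = n - 2 := by
      rw [card_erase_of_mem hmem, card_erase_of_mem (mem_univ c), card_univ, Fintype.card_fin]
      omega
    simp only [smul_eq_mul, mul_one] at e3
    omega

private lemma iso_star {n : ℕ} (hn : 4 ≤ n) (T : SimpleGraph (Fin n))
    (hd1 : ∀ v, 1 ≤ deg T v) (hsum : ∑ v, deg T v = 2 * (n - 1)) :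
    (∀ v, deg T v = 1 ∨ deg T v = n - 1) ↔ Nonempty (T ≃g starGraph n) := by
  classical
  constructor
  · intro hcond
    obtain ⟨c, hc, huniq'⟩ := center_unique hn (deg T) hd1 hsum hcond
    have huniq : ∀ u, u ≠ c → deg T u = 1 := huniq'
    have hadjc : ∀ v, T.Adj c v ↔ v ≠ c := by
      have hsub : T.neighborFinset c ⊆ univ.erase c := by
        intro v hv
        rw [SimpleGraph.mem_neighborFinset] at hv
        exact mem_erase.2 ⟨hv.ne', mem_univ v⟩
      have hcard : (univ.erase c).card ≤ (T.neighborFinset c).card := by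
        rw [card_erase_of_mem (mem_univ c), card_univ, Fintype.card_fin,
          SimpleGraph.card_neighborFinset_eq_degree, ← deg_eq_degree, hc]
      have heq := Finset.eq_of_subset_of_card_le hsub hcard
      intro v
      rw [← SimpleGraph.mem_neighborFinset, heq, mem_erase]
      simp
    have hadju : ∀ u, u ≠ c → ∀ v, (T.Adj u v ↔ v = c) := by
      intro u hu v
      have hsub : ({c} : Finset (Fin n)) ⊆ T.neighborFinset u := by
        simp only [singleton_subset_iff, SimpleGraph.mem_neighborFinset]
        exact ((hadjc u).2 hu).symm
      have hcard : (T.neighborFinset u).card ≤ ({c} : Finset (Fin n)).card := by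
        rw [card_singleton, SimpleGraph.card_neighborFinset_eq_degree, ← deg_eq_degree,
          huniq u hu]
      have heq := (Finset.eq_of_subset_of_card_le hsub hcard).symm
      rw [← SimpleGraph.mem_neighborFinset, heq, mem_singleton]
    have hchar : ∀ a b, T.Adj a b ↔ a ≠ b ∧ (a = c ∨ b = c) := by
      intro a b
      by_cases ha : a = c
      · subst ha
        rw [hadjc b]
        constructor
        · intro h; exact ⟨h.symm, Or.inl rfl⟩
        · rintro ⟨h, -⟩; exact h.symm
      · rw [hadju a ha b]
        constructor
        · rintro rfl; exact ⟨ha, Or.inr rfl⟩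
        · rintro ⟨hab, rfl | rfl⟩
          · exact absurd rfl ha
          · rfl
    set z : Fin n := ⟨0, by omega⟩ with hz
    have hez : ∀ a, Equiv.swap c z a = z ↔ a = c := by
      intro a
      rw [Equiv.swap_apply_eq_iff, Equiv.swap_apply_right]
    refine ⟨⟨Equiv.swap c z, ?_⟩⟩
    intro a b
    rw [star_adj, hchar a b]
    have hv0 : ∀ x : Fin n, x.val = 0 ↔ x = z := by
      intro x; rw [Fin.ext_iff]
    rw [hv0, hv0, hez, hez, (Equiv.swap c z).injective.ne_iff]
  · rintro ⟨φ⟩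
    intro v
    have : deg T v = deg (starGraph n) (φ v) :=
      Nat.card_congr (φ.mapNeighborSet v)
    rw [this, star_deg hn]
    split
    · exact Or.inr rfl
    · exact Or.inl rfl

private lemma master {n : ℕ} (hn : 4 ≤ n)
    (d : Fin n → ℕ) (hd1 : ∀ v, 1 ≤ d v) (hdN : ∀ v, d v ≤ n - 1)
    (hsum : ∑ v, d v = 2 * (n - 1))
    (f : ℝ → ℝ) (hf : StrictConvexOn ℝ (Set.Icc 1 ((n:ℝ)-1)) f) :
    (∑ v : Fin n, f (d v)) ≤ ((n:ℝ)-1) * f 1 + f ((n:ℝ)-1) ∧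
    ((∑ v : Fin n, f (d v)) = ((n:ℝ)-1) * f 1 + f ((n:ℝ)-1) ↔
      ∀ v, d v = 1 ∨ d v = n - 1) := by
  set N : ℝ := (n:ℝ) - 1 with hNdef
  have hn4 : (4:ℝ) ≤ (n:ℝ) := by exact_mod_cast hn
  have hN : 2 < N := by rw [hNdef]; linarith
  have hcastN : ((n - 1 : ℕ) : ℝ) = N := by
    rw [hNdef]; push_cast [Nat.cast_sub (by omega : 1 ≤ n)]; ring
  have hx1 : ∀ v, (1:ℝ) ≤ (d v : ℝ) := fun v => by exact_mod_cast hd1 v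
  have hxN : ∀ v, (d v : ℝ) ≤ N := fun v => by
    rw [← hcastN]; exact_mod_cast hdN v
  have hsumR : ∑ v : Fin n, (d v : ℝ) = 2 * N := by
    rw [hNdef, ← Nat.cast_sum]
    rw [hsum]
    push_cast [Nat.cast_sub (by omega : 1 ≤ n)]
    ring
  set B : Fin n → ℝ := fun v => ((N - d v) * f 1 + ((d v : ℝ) - 1) * f N) / (N - 1) with hBdef
  have hB : ∀ v, f (d v) ≤ B v := fun v => (interp hN hf (hx1 v) (hxN v)).1
  have hBsum : ∑ v, B v = N * f 1 + f N := by
    have e1 : ∑ v : Fin n, (N - (d v : ℝ)) = (n:ℝ) * N - 2 * N := by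
      rw [Finset.sum_sub_distrib, Finset.sum_const, hsumR, card_univ, Fintype.card_fin,
        nsmul_eq_mul]
    have e2 : ∑ v : Fin n, ((d v : ℝ) - 1) = 2 * N - (n:ℝ) := by
      rw [Finset.sum_sub_distrib, hsumR, Finset.sum_const, card_univ, Fintype.card_fin,
        nsmul_eq_mul, mul_one]
    rw [hBdef, ← Finset.sum_div, Finset.sum_add_distrib, ← Finset.sum_mul, ← Finset.sum_mul,
      e1, e2, div_eq_iff (by rw [hNdef]; intro h; nlinarith : N - 1 ≠ 0), hNdef]
    ring
  have hle : (∑ v : Fin n, f (d v)) ≤ N * f 1 + f N :=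
    (Finset.sum_le_sum fun v _ => hB v).trans_eq hBsum
  refine ⟨hle, ?_, ?_⟩
  · intro heq
    by_contra hv
    push_neg at hv
    obtain ⟨v0, h1, h2⟩ := hv
    have hne1 : (d v0 : ℝ) ≠ 1 := by exact_mod_cast h1
    have hneN : (d v0 : ℝ) ≠ N := by
      rw [← hcastN]; exact_mod_cast h2
    have hstrict : f (d v0) < B v0 := (interp hN hf (hx1 v0) (hxN v0)).2 hne1 hneN
    have : (∑ v : Fin n, f (d v)) < ∑ v, B v :=
      Finset.sum_lt_sum (fun v _ => hB v) ⟨v0, mem_univ _, hstrict⟩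
    rw [hBsum] at this
    linarith
  · intro hcond
    obtain ⟨c, hc, hrest⟩ := center_unique hn d hd1 hsum hcond
    rw [← Finset.add_sum_erase _ _ (mem_univ c)]
    have : ∑ v ∈ univ.erase c, f (d v) = (n - 1 : ℕ) * f 1 := by
      rw [Finset.sum_congr rfl (fun v hv => by
        rw [hrest v (mem_erase.1 hv).1, Nat.cast_one])]
      rw [Finset.sum_const, card_erase_of_mem (mem_univ c), card_univ, Fintype.card_fin,
        nsmul_eq_mul]
    rw [this, hc, hcastN]
    ring

theorem stmt13 (n : ℕ) (hn : 4 ≤ n) (T : SimpleGraph (Fin n)) (hT : T.IsTree) :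
    (∀ α : ℝ, (α < 0 ∨ 1 < α) →
      R0 T α ≤ ((n : ℝ) - 1) ^ α + ((n : ℝ) - 1) ∧
      (R0 T α = ((n : ℝ) - 1) ^ α + ((n : ℝ) - 1) ↔ Nonempty (T ≃g starGraph n))) ∧
    (∀ α : ℝ, 0 < α → α < 1 →
      R0 T α ≥ ((n : ℝ) - 1) ^ α + ((n : ℝ) - 1) ∧
      (R0 T α = ((n : ℝ) - 1) ^ α + ((n : ℝ) - 1) ↔ Nonempty (T ≃g starGraph n))) := by
  obtain ⟨hd1, hdN, hsum⟩ := deg_facts hn T hT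
  have hn4 : (4:ℝ) ≤ (n:ℝ) := by exact_mod_cast hn
  have hIcc1 : Set.Icc (1:ℝ) ((n:ℝ)-1) ⊆ Set.Ioi 0 :=
    fun x hx => lt_of_lt_of_le one_pos hx.1
  have hIcc2 : Set.Icc (1:ℝ) ((n:ℝ)-1) ⊆ Set.Ici 0 :=
    fun x hx => le_trans zero_le_one hx.1
  have hiso := iso_star hn T hd1 hsum
  constructor
  · intro α hα
    have hf : StrictConvexOn ℝ (Set.Icc 1 ((n:ℝ)-1)) (fun x : ℝ => x ^ α) :=
      (strictConvexOn_rpow_aux hα).subset hIcc1 (convex_Icc _ _)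
    obtain ⟨hle, heq⟩ := master hn (deg T) hd1 hdN hsum _ hf
    simp only [Real.one_rpow, mul_one] at hle heq
    constructor
    · unfold R0
      linarith
    · unfold R0
      rw [show ((n:ℝ)-1) ^ α + ((n:ℝ)-1) = ((n:ℝ)-1) + ((n:ℝ)-1) ^ α from add_comm _ _]
      exact heq.trans hiso
  · intro α h0 h1α
    have hconc : StrictConcaveOn ℝ (Set.Icc (1:ℝ) ((n:ℝ)-1)) (fun x : ℝ => x ^ α) :=
      (Real.strictConcaveOn_rpow h0 h1α).subset hIcc2 (convex_Icc _ _)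
    obtain ⟨hle, heq⟩ := master hn (deg T) hd1 hdN hsum _ hconc.neg
    simp only [Pi.neg_apply, Real.one_rpow, mul_neg, mul_one] at hle heq
    rw [Finset.sum_neg_distrib] at hle heq
    constructor
    · unfold R0
      linarith
    · unfold R0
      rw [← hiso, ← heq]
      constructor <;> intro h <;> linarith
end

section
/- Let n ≥ 6 and 3 ≤ k ≤ n−2, and let T be a tree on n vertices with exactly k segments (equivalently, with exactly n − k − 1 vertices of degree 2). Then R⁰_α(T) ≤ 2^α n + k^α − (2^α − 1)k − 2^α if α < 0 or α > 1, and R⁰_α(T) ≥ 2^α n + k^α − (2^α − 1)k − 2^α if 0 < α < 1; moreover SEI_a(T) ≤ 2a²n + k·a^k − (2a − 1)ak − 2a² for every real a > 1. Equality holds in any of these inequalities if and only if T has exactly one vertex of degree k, exactly n − k − 1 vertices of degree 2, and exactly k vertices of degree 1. -/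
open Finset Real

attribute [local instance] Classical.propDecidable

lemma deg_eq {n : ℕ} (G : SimpleGraph (Fin n)) (v : Fin n) : deg G v = G.degree v := by
  rw [deg, Nat.card_eq_fintype_card, SimpleGraph.card_neighborSet_eq_degree]

lemma countDeg_eq {n : ℕ} (G : SimpleGraph (Fin n)) (d : ℕ) :
    countDeg G d = (Finset.univ.filter fun v => deg G v = d).card := by
  rw [countDeg, Nat.card_eq_fintype_card, Fintype.card_subtype]

/-- Secant line inequality for strictly convex functions, with equality characterization. -/
lemma secant_lemma {s : Set ℝ} {f : ℝ → ℝ} (hf : StrictConvexOn ℝ s f)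
    {a b x : ℝ} (ha : a ∈ s) (hb : b ∈ s) (hab : a < b)
    (hx1 : a ≤ x) (hx2 : x ≤ b) :
    f x ≤ f a + (x - a) * ((f b - f a) / (b - a)) ∧
    (f x = f a + (x - a) * ((f b - f a) / (b - a)) ↔ x = a ∨ x = b) := by
  have hba : (0:ℝ) < b - a := by linarith
  rcases eq_or_lt_of_le hx1 with h1 | h1
  · subst h1
    constructor
    · simp
    · simp
  rcases eq_or_lt_of_le hx2 with h2 | h2
  · subst h2
    have : f a + (x - a) * ((f x - f a) / (x - a)) = f x := by
      field_simp
      ring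
    constructor
    · rw [this]
    · rw [this]; simp
  -- interior case : strict inequality
  have key : f x < f a + (x - a) * ((f b - f a) / (b - a)) := by
    set t : ℝ := (b - x) / (b - a) with ht_def
    have ht0 : 0 < t := by
      apply div_pos <;> linarith
    have ht1 : 0 < 1 - t := by
      rw [ht_def]
      rw [sub_pos, div_lt_one hba]
      linarith
    have hxc : t • a + (1 - t) • b = x := by
      simp only [smul_eq_mul, ht_def]
      field_simp
      ring
    have := hf.2 ha hb (ne_of_lt hab) ht0 ht1 (by ring)
    rw [hxc] at this
    simp only [smul_eq_mul] at this
    have heq : t * f a + (1 - t) * f b = f a + (x - a) * ((f b - f a) / (b - a)) := by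
      rw [ht_def]
      field_simp
      ring
    linarith
  refine ⟨le_of_lt key, fun h => absurd h (ne_of_lt key), ?_⟩
  rintro (rfl | rfl) <;> linarith

/-- Strict convexity of `x ^ α` on `(0, ∞)` for `α < 0`. -/
lemma strictConvexOn_rpow_neg {α : ℝ} (hα : α < 0) :
    StrictConvexOn ℝ (Set.Ioi 0) (fun x : ℝ => x ^ α) := by
  apply strictConvexOn_of_deriv2_pos (convex_Ioi 0)
  · intro x hx
    exact (Real.continuousAt_rpow_const x α (Or.inl (ne_of_gt hx))).continuousWithinAt
  · intro x hx
    rw [interior_Ioi] at hx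
    have hx0 : (0:ℝ) < x := hx
    have hev : (deriv fun z : ℝ => z ^ α) =ᶠ[nhds x] fun y => α * y ^ (α - 1) := by
      filter_upwards [lt_mem_nhds hx0] with y hy
      exact (Real.hasDerivAt_rpow_const (Or.inl (ne_of_gt hy))).deriv
    have h2 : HasDerivAt (fun y : ℝ => α * y ^ (α - 1)) (α * ((α - 1) * x ^ (α - 1 - 1))) x :=
      (Real.hasDerivAt_rpow_const (p := α - 1) (Or.inl (ne_of_gt hx0))).const_mul α
    have : deriv^[2] (fun z : ℝ => z ^ α) x = α * ((α - 1) * x ^ (α - 1 - 1)) := by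
      show deriv (deriv fun z : ℝ => z ^ α) x = _
      rw [Filter.EventuallyEq.deriv_eq hev]
      exact h2.deriv
    rw [this]
    have h3 : 0 < x ^ (α - 1 - 1) := Real.rpow_pos_of_pos hx0 _
    have h4 : (0:ℝ) < -α := by linarith
    have h5 : (0:ℝ) < 1 - α := by linarith
    nlinarith [mul_pos h4 (mul_pos h5 h3)]
/-- Strict convexity of `x * exp (x * L)` on `[0, ∞)` for `L > 0`. -/
lemma strictConvexOn_mul_exp {L : ℝ} (hL : 0 < L) :
    StrictConvexOn ℝ (Set.Ici 0) (fun x : ℝ => x * Real.exp (x * L)) := by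
  have hd1 : ∀ x : ℝ, HasDerivAt (fun y : ℝ => y * Real.exp (y * L))
      (Real.exp (x * L) * (1 + x * L)) x := by
    intro x
    have he : HasDerivAt (fun y : ℝ => Real.exp (y * L)) (Real.exp (x * L) * L) x := by
      have : HasDerivAt (fun y : ℝ => y * L) (1 * L) x := (hasDerivAt_id x).mul_const L
      simpa using this.exp
    have := (hasDerivAt_id x).mul he
    refine this.congr_deriv ?_
    simp only [id_eq]
    try ring
  apply strictConvexOn_of_deriv2_pos (convex_Ici 0)
  · exact (Continuous.mul continuous_id (Real.continuous_exp.comp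
      (continuous_id.mul continuous_const))).continuousOn
  · intro x hx
    rw [interior_Ici] at hx
    have hx0 : (0:ℝ) < x := hx
    have hev : (deriv fun y : ℝ => y * Real.exp (y * L))
        = fun y => Real.exp (y * L) * (1 + y * L) := funext fun y => (hd1 y).deriv
    have h2 : HasDerivAt (fun y : ℝ => Real.exp (y * L) * (1 + y * L))
        (Real.exp (x * L) * L * (1 + x * L) + Real.exp (x * L) * L) x := by
      have he : HasDerivAt (fun y : ℝ => Real.exp (y * L)) (Real.exp (x * L) * L) x := by
        have : HasDerivAt (fun y : ℝ => y * L) (1 * L) x := (hasDerivAt_id x).mul_const L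
        simpa using this.exp
      have hg : HasDerivAt (fun y : ℝ => 1 + y * L) (L) x := by
        have : HasDerivAt (fun y : ℝ => y * L) (1 * L) x := (hasDerivAt_id x).mul_const L
        simpa using this.const_add 1
      have := he.mul hg
      exact this
      try ring
    have : deriv^[2] (fun y : ℝ => y * Real.exp (y * L)) x
        = Real.exp (x * L) * L * (1 + x * L) + Real.exp (x * L) * L := by
      show deriv (deriv fun y : ℝ => y * Real.exp (y * L)) x = _
      rw [hev]
      exact h2.deriv
    rw [this]
    have h3 : 0 < Real.exp (x * L) := Real.exp_pos _
    nlinarith [mul_pos h3 hL, mul_pos (mul_pos h3 hL) (mul_pos hx0 hL)]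

/-- The key combinatorial lemma. -/
lemma key_lemma (n k : ℕ) (hn : 6 ≤ n) (hkl : 3 ≤ k) (hku : k ≤ n - 2)
    (T : SimpleGraph (Fin n)) (hT : T.IsTree) (hseg : countDeg T 2 = n - k - 1)
    (f : ℝ → ℝ)
    (hsec : ∀ m : ℕ, 1 ≤ m → m ≤ k →
      f (m : ℝ) ≤ f 1 + ((m : ℝ) - 1) * ((f (k : ℝ) - f 1) / ((k : ℝ) - 1)) ∧
      (f (m : ℝ) = f 1 + ((m : ℝ) - 1) * ((f (k : ℝ) - f 1) / ((k : ℝ) - 1)) ↔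
        m = 1 ∨ m = k)) :
    (∑ v : Fin n, f (deg T v : ℝ)) ≤ ((n : ℝ) - k - 1) * f 2 + (k : ℝ) * f 1 + f (k : ℝ) ∧
    ((∑ v : Fin n, f (deg T v : ℝ)) = ((n : ℝ) - k - 1) * f 2 + (k : ℝ) * f 1 + f (k : ℝ) ↔
      (countDeg T k = 1 ∧ countDeg T 1 = k)) := by
  have hkn : k + 2 ≤ n := by omega
  -- every vertex has degree at least 1
  have hd1 : ∀ v : Fin n, 1 ≤ deg T v := by
    intro v
    obtain ⟨u, hu⟩ := Fintype.exists_ne_of_one_lt_card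
      (by simp only [Fintype.card_fin]; omega) v
    obtain ⟨p⟩ := hT.isConnected.preconnected v u
    have hadj : ∃ w, T.Adj v w := by
      cases p with
      | nil => exact absurd rfl hu
      | cons h q => exact ⟨_, h⟩
    rw [deg_eq]
    exact (SimpleGraph.degree_pos_iff_exists_adj T v).mpr hadj
  -- handshake
  have hsum : ∑ v : Fin n, deg T v = 2 * (n - 1) := by
    simp_rw [deg_eq]
    rw [SimpleGraph.sum_degrees_eq_twice_card_edges]
    have h := hT.card_edgeFinset
    rw [Fintype.card_fin] at h
    omega
  set P : Finset (Fin n) := Finset.univ.filter (fun v => deg T v = 2) with hPdef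
  set S : Finset (Fin n) := Finset.univ.filter (fun v => ¬ deg T v = 2) with hSdef
  have hP : P.card = n - k - 1 := by rw [hPdef, ← countDeg_eq]; exact hseg
  have hPS : P.card + S.card = n := by
    rw [hPdef, hSdef, Finset.card_filter_add_card_filter_not, Finset.card_univ,
      Fintype.card_fin]
  have hS : S.card = k + 1 := by omega
  have hPsum : ∑ v ∈ P, deg T v = 2 * (n - k - 1) := by
    rw [Finset.sum_congr rfl (fun v hv => (Finset.mem_filter.mp hv).2), Finset.sum_const, hP,
      smul_eq_mul, mul_comm]
  have hsplitN : ∑ v ∈ P, deg T v + ∑ v ∈ S, deg T v = ∑ v : Fin n, deg T v :=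
    Finset.sum_filter_add_sum_filter_not _ _ _
  have hSsum : ∑ v ∈ S, deg T v = 2 * k := by omega
  have hdk : ∀ v ∈ S, deg T v ≤ k := by
    intro v hv
    have h1 : (S.erase v).card • 1 ≤ ∑ u ∈ S.erase v, deg T u :=
      Finset.card_nsmul_le_sum _ _ _ (fun u _ => hd1 u)
    have h2 : deg T v + ∑ u ∈ S.erase v, deg T u = 2 * k := by
      rw [Finset.add_sum_erase _ _ hv]; exact hSsum
    have h3 : (S.erase v).card = k := by rw [Finset.card_erase_of_mem hv, hS]; omega
    simp only [smul_eq_mul, mul_one, h3] at h1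
    omega
  set c : ℝ := (f (k : ℝ) - f 1) / ((k : ℝ) - 1) with hc_def
  have hstep : ∀ v ∈ S, f (deg T v : ℝ) ≤ f 1 + ((deg T v : ℝ) - 1) * c :=
    fun v hv => (hsec _ (hd1 v) (hdk v hv)).1
  have hk1 : ((k : ℝ) - 1) ≠ 0 := by
    have : (3:ℝ) ≤ (k:ℝ) := by exact_mod_cast hkl
    linarith
  have hRHS : ∑ v ∈ S, (f 1 + ((deg T v : ℝ) - 1) * c) = (k : ℝ) * f 1 + f (k : ℝ) := by
    rw [Finset.sum_add_distrib, Finset.sum_const, hS, nsmul_eq_mul]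
    have h1 : ∑ v ∈ S, ((deg T v : ℝ) - 1) * c = ((k : ℝ) - 1) * c := by
      rw [← Finset.sum_mul]
      congr 1
      have h2 : ∑ v ∈ S, ((deg T v : ℝ) - 1) = (∑ v ∈ S, (deg T v : ℝ)) - S.card := by
        rw [Finset.sum_sub_distrib, Finset.sum_const, nsmul_eq_mul, mul_one]
      rw [h2, hS]
      have h3 : ∑ v ∈ S, (deg T v : ℝ) = ((2 * k : ℕ) : ℝ) := by
        rw [← hSsum]; push_cast; ring
      rw [h3]
      push_cast
      ring
    rw [h1, hc_def, mul_div_cancel₀ _ hk1]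
    push_cast
    ring
  have hSbound : ∑ v ∈ S, f (deg T v : ℝ) ≤ (k : ℝ) * f 1 + f (k : ℝ) := by
    rw [← hRHS]; exact Finset.sum_le_sum hstep
  have hcast : ((n - k - 1 : ℕ) : ℝ) = (n : ℝ) - k - 1 := by
    have h1 : n - k - 1 = n - (k + 1) := by omega
    rw [h1, Nat.cast_sub (by omega)]
    push_cast
    ring
  have hsplit : ∑ v : Fin n, f (deg T v : ℝ)
      = ((n : ℝ) - k - 1) * f 2 + ∑ v ∈ S, f (deg T v : ℝ) := by
    rw [← Finset.sum_filter_add_sum_filter_not Finset.univ (fun v => deg T v = 2)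
      (fun v => f (deg T v : ℝ))]
    congr 1
    have h1 : ∀ v ∈ P, f (deg T v : ℝ) = f 2 := by
      intro v hv
      rw [(Finset.mem_filter.mp hv).2]
      norm_num
    rw [Finset.sum_congr rfl h1, Finset.sum_const, hP, nsmul_eq_mul, hcast]
  constructor
  · rw [hsplit]; linarith
  -- equality characterization
  have heqS : (∑ v ∈ S, f (deg T v : ℝ)) = (k : ℝ) * f 1 + f (k : ℝ) ↔
      ∀ v ∈ S, deg T v = 1 ∨ deg T v = k := by
    rw [← hRHS, Finset.sum_eq_sum_iff_of_le hstep]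
    constructor
    · intro h v hv
      exact ((hsec _ (hd1 v) (hdk v hv)).2).mp (h v hv)
    · intro h v hv
      exact ((hsec _ (hd1 v) (hdk v hv)).2).mpr (h v hv)
  -- counting characterization
  set A : Finset (Fin n) := Finset.univ.filter (fun v => deg T v = k) with hAdef
  set B : Finset (Fin n) := Finset.univ.filter (fun v => deg T v = 1) with hBdef
  have hAS : A ⊆ S := by
    intro v hv
    rw [hAdef, Finset.mem_filter] at hv
    rw [hSdef, Finset.mem_filter]
    exact ⟨Finset.mem_univ v, by omega⟩
  have hBS : B ⊆ S := by
    intro v hv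
    rw [hBdef, Finset.mem_filter] at hv
    rw [hSdef, Finset.mem_filter]
    exact ⟨Finset.mem_univ v, by omega⟩
  have hdisj : Disjoint A B := by
    rw [Finset.disjoint_left]
    intro v hvA hvB
    rw [hAdef, Finset.mem_filter] at hvA
    rw [hBdef, Finset.mem_filter] at hvB
    omega
  have hcountA : countDeg T k = A.card := countDeg_eq T k
  have hcountB : countDeg T 1 = B.card := countDeg_eq T 1
  have hcond : (∀ v ∈ S, deg T v = 1 ∨ deg T v = k) ↔ (countDeg T k = 1 ∧ countDeg T 1 = k) := by
    constructor
    · intro hall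
      have hUnion : A ∪ B = S := by
        apply Finset.Subset.antisymm (Finset.union_subset hAS hBS)
        intro v hv
        rcases hall v hv with h | h
        · exact Finset.mem_union_right _ (by rw [hBdef, Finset.mem_filter]; exact ⟨Finset.mem_univ v, h⟩)
        · exact Finset.mem_union_left _ (by rw [hAdef, Finset.mem_filter]; exact ⟨Finset.mem_univ v, h⟩)
      have hcardsum : A.card + B.card = k + 1 := by
        rw [← Finset.card_union_of_disjoint hdisj, hUnion, hS]
      have hsum2 : A.card * k + B.card = 2 * k := by
        have h1 : ∑ v ∈ A, deg T v = A.card * k := by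
          rw [Finset.sum_congr rfl (fun v hv => (Finset.mem_filter.mp hv).2), Finset.sum_const,
            smul_eq_mul]
        have h2 : ∑ v ∈ B, deg T v = B.card := by
          rw [Finset.sum_congr rfl (fun v hv => (Finset.mem_filter.mp hv).2), Finset.sum_const,
            smul_eq_mul, mul_one]
        have h3 : ∑ v ∈ A ∪ B, deg T v = 2 * k := by rw [hUnion]; exact hSsum
        rw [Finset.sum_union hdisj, h1, h2] at h3
        omega
      have hA1 : A.card = 1 := by
        rcases Nat.lt_trichotomy A.card 1 with h | h | h
        · exfalso
          have ha0 : A.card = 0 := by omega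
          rw [ha0, zero_mul] at hsum2
          omega
        · exact h
        · exfalso
          have h4 : 2 * k ≤ A.card * k := Nat.mul_le_mul_right k h
          have hb0 : B.card = 0 := by omega
          have h5 : A.card = k + 1 := by omega
          rw [h5, hb0] at hsum2
          have h6 : (k + 1) * k = 2 * k := by omega
          have h7 : k + 1 = 2 := Nat.eq_of_mul_eq_mul_right (by omega) h6
          omega
      refine ⟨by rw [hcountA, hA1], by rw [hcountB]; omega⟩
    · rintro ⟨h1, h2⟩
      rw [hcountA] at h1
      rw [hcountB] at h2
      have hcard : (A ∪ B).card = k + 1 := by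
        rw [Finset.card_union_of_disjoint hdisj, h1, h2]; omega
      have hUnion : A ∪ B = S := by
        apply Finset.eq_of_subset_of_card_le (Finset.union_subset hAS hBS)
        rw [hS, hcard]
      intro v hv
      rw [← hUnion] at hv
      rcases Finset.mem_union.mp hv with h | h
      · right; exact (Finset.mem_filter.mp h).2
      · left; exact (Finset.mem_filter.mp h).2
  constructor
  · intro h
    rw [← hcond, ← heqS]
    rw [hsplit] at h
    linarith
  · intro h
    rw [hsplit]
    have := heqS.mpr (hcond.mpr h)
    linarith

theorem stmt14 (n k : ℕ) (hn : 6 ≤ n) (hkl : 3 ≤ k) (hku : k ≤ n - 2)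
    (T : SimpleGraph (Fin n)) (hT : T.IsTree) (hseg : countDeg T 2 = n - k - 1) :
    (∀ α : ℝ, (α < 0 ∨ 1 < α) →
      R0 T α ≤ (2 : ℝ) ^ α * (n : ℝ) + (k : ℝ) ^ α - ((2 : ℝ) ^ α - 1) * (k : ℝ) -
        (2 : ℝ) ^ α ∧
      (R0 T α = (2 : ℝ) ^ α * (n : ℝ) + (k : ℝ) ^ α - ((2 : ℝ) ^ α - 1) * (k : ℝ) -
        (2 : ℝ) ^ α ↔
        (countDeg T k = 1 ∧ countDeg T 2 = n - k - 1 ∧ countDeg T 1 = k))) ∧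
    (∀ α : ℝ, 0 < α → α < 1 →
      R0 T α ≥ (2 : ℝ) ^ α * (n : ℝ) + (k : ℝ) ^ α - ((2 : ℝ) ^ α - 1) * (k : ℝ) -
        (2 : ℝ) ^ α ∧
      (R0 T α = (2 : ℝ) ^ α * (n : ℝ) + (k : ℝ) ^ α - ((2 : ℝ) ^ α - 1) * (k : ℝ) -
        (2 : ℝ) ^ α ↔
        (countDeg T k = 1 ∧ countDeg T 2 = n - k - 1 ∧ countDeg T 1 = k))) ∧
    (∀ a : ℝ, 1 < a →
      SEI T a ≤ 2 * a ^ 2 * (n : ℝ) + (k : ℝ) * a ^ k - (2 * a - 1) * a * (k : ℝ) -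
        2 * a ^ 2 ∧
      (SEI T a = 2 * a ^ 2 * (n : ℝ) + (k : ℝ) * a ^ k - (2 * a - 1) * a * (k : ℝ) -
        2 * a ^ 2 ↔
        (countDeg T k = 1 ∧ countDeg T 2 = n - k - 1 ∧ countDeg T 1 = k))) := by
  have hk1 : (1:ℝ) < (k:ℝ) := by
    have : (3:ℝ) ≤ (k:ℝ) := by exact_mod_cast hkl
    linarith
  refine ⟨?_, ?_, ?_⟩
  · -- α < 0 or 1 < α : convex case
    intro α hα
    set f : ℝ → ℝ := fun x => x ^ α with hf_def
    have hsec : ∀ m : ℕ, 1 ≤ m → m ≤ k →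
        f (m : ℝ) ≤ f 1 + ((m : ℝ) - 1) * ((f (k : ℝ) - f 1) / ((k : ℝ) - 1)) ∧
        (f (m : ℝ) = f 1 + ((m : ℝ) - 1) * ((f (k : ℝ) - f 1) / ((k : ℝ) - 1)) ↔
          m = 1 ∨ m = k) := by
      intro m hm1 hmk
      have hm1' : (1:ℝ) ≤ (m:ℝ) := by exact_mod_cast hm1
      have hmk' : (m:ℝ) ≤ (k:ℝ) := by exact_mod_cast hmk
      have hcvx : StrictConvexOn ℝ (Set.Ioi 0) f ∨ StrictConvexOn ℝ (Set.Ici 0) f := by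
        rcases hα with h | h
        · exact Or.inl (strictConvexOn_rpow_neg h)
        · exact Or.inr (strictConvexOn_rpow h)
      have key : f (m : ℝ) ≤ f 1 + ((m : ℝ) - 1) * ((f (k : ℝ) - f 1) / ((k : ℝ) - 1)) ∧
          (f (m : ℝ) = f 1 + ((m : ℝ) - 1) * ((f (k : ℝ) - f 1) / ((k : ℝ) - 1)) ↔
            (m : ℝ) = 1 ∨ (m : ℝ) = (k : ℝ)) := by
        rcases hcvx with h | h
        · exact secant_lemma h (by norm_num) (Set.mem_Ioi.mpr (by linarith)) hk1 hm1' hmk'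
        · exact secant_lemma h (by norm_num) (Set.mem_Ici.mpr (by linarith)) hk1 hm1' hmk'
      refine ⟨key.1, key.2.trans ?_⟩
      constructor
      · rintro (h | h)
        · left; exact_mod_cast h
        · right; exact_mod_cast h
      · rintro (h | h)
        · left; exact_mod_cast h
        · right; exact_mod_cast h
    obtain ⟨hle, hiff⟩ := key_lemma n k hn hkl hku T hT hseg f hsec
    have hR0 : R0 T α = ∑ v : Fin n, f (deg T v : ℝ) := rfl
    have hval : ((n : ℝ) - k - 1) * f 2 + (k : ℝ) * f 1 + f (k : ℝ)
        = (2 : ℝ) ^ α * (n : ℝ) + (k : ℝ) ^ α - ((2 : ℝ) ^ α - 1) * (k : ℝ) - (2 : ℝ) ^ α := by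
      simp only [hf_def, Real.one_rpow]
      ring
    rw [hR0, ← hval]
    exact ⟨hle, hiff.trans (by tauto)⟩
  · -- 0 < α < 1 : concave case
    intro α hα0 hα1
    set f : ℝ → ℝ := fun x => -(x ^ α) with hf_def
    have hcvx : StrictConvexOn ℝ (Set.Ici 0) f := (Real.strictConcaveOn_rpow hα0 hα1).neg
    have hsec : ∀ m : ℕ, 1 ≤ m → m ≤ k →
        f (m : ℝ) ≤ f 1 + ((m : ℝ) - 1) * ((f (k : ℝ) - f 1) / ((k : ℝ) - 1)) ∧
        (f (m : ℝ) = f 1 + ((m : ℝ) - 1) * ((f (k : ℝ) - f 1) / ((k : ℝ) - 1)) ↔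
          m = 1 ∨ m = k) := by
      intro m hm1 hmk
      have hm1' : (1:ℝ) ≤ (m:ℝ) := by exact_mod_cast hm1
      have hmk' : (m:ℝ) ≤ (k:ℝ) := by exact_mod_cast hmk
      have key := secant_lemma hcvx (a := 1) (b := (k:ℝ)) (by norm_num)
        (Set.mem_Ici.mpr (by linarith)) hk1 hm1' hmk'
      refine ⟨key.1, key.2.trans ?_⟩
      constructor
      · rintro (h | h)
        · left; exact_mod_cast h
        · right; exact_mod_cast h
      · rintro (h | h)
        · left; exact_mod_cast h
        · right; exact_mod_cast h
    obtain ⟨hle, hiff⟩ := key_lemma n k hn hkl hku T hT hseg f hsec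
    have hR0 : ∑ v : Fin n, f (deg T v : ℝ) = -(R0 T α) := by
      rw [R0, ← Finset.sum_neg_distrib]
    have hval : ((n : ℝ) - k - 1) * f 2 + (k : ℝ) * f 1 + f (k : ℝ)
        = -((2 : ℝ) ^ α * (n : ℝ) + (k : ℝ) ^ α - ((2 : ℝ) ^ α - 1) * (k : ℝ) - (2 : ℝ) ^ α) := by
      simp only [hf_def, Real.one_rpow]
      ring
    rw [hR0, hval] at hle hiff
    constructor
    · linarith
    · constructor
      · intro h
        obtain ⟨c1, c2⟩ := hiff.mp (by linarith)
        exact ⟨c1, hseg, c2⟩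
      · rintro ⟨c1, -, c2⟩
        have := hiff.mpr ⟨c1, c2⟩
        linarith
  · -- SEI case
    intro a ha
    have ha0 : (0:ℝ) < a := by linarith
    have hL : 0 < Real.log a := Real.log_pos ha
    set f : ℝ → ℝ := fun x => x * Real.exp (x * Real.log a) with hf_def
    have hcvx : StrictConvexOn ℝ (Set.Ici 0) f := strictConvexOn_mul_exp hL
    have hfm : ∀ m : ℕ, f (m : ℝ) = (m : ℝ) * a ^ m := by
      intro m
      simp only [hf_def]
      rw [Real.exp_nat_mul, Real.exp_log ha0]
    have hsec : ∀ m : ℕ, 1 ≤ m → m ≤ k →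
        f (m : ℝ) ≤ f 1 + ((m : ℝ) - 1) * ((f (k : ℝ) - f 1) / ((k : ℝ) - 1)) ∧
        (f (m : ℝ) = f 1 + ((m : ℝ) - 1) * ((f (k : ℝ) - f 1) / ((k : ℝ) - 1)) ↔
          m = 1 ∨ m = k) := by
      intro m hm1 hmk
      have hm1' : (1:ℝ) ≤ (m:ℝ) := by exact_mod_cast hm1
      have hmk' : (m:ℝ) ≤ (k:ℝ) := by exact_mod_cast hmk
      have key := secant_lemma hcvx (a := 1) (b := (k:ℝ)) (by norm_num)
        (Set.mem_Ici.mpr (by linarith)) hk1 hm1' hmk'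
      refine ⟨key.1, key.2.trans ?_⟩
      constructor
      · rintro (h | h)
        · left; exact_mod_cast h
        · right; exact_mod_cast h
      · rintro (h | h)
        · left; exact_mod_cast h
        · right; exact_mod_cast h
    obtain ⟨hle, hiff⟩ := key_lemma n k hn hkl hku T hT hseg f hsec
    have hSEI : ∑ v : Fin n, f (deg T v : ℝ) = SEI T a := by
      rw [SEI]
      exact Finset.sum_congr rfl (fun v _ => hfm (deg T v))
    have hf1 : f 1 = a := by
      have := hfm 1
      simpa using this
    have hf2 : f 2 = 2 * a ^ 2 := by
      have := hfm 2
      simpa using this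
    have hval : ((n : ℝ) - k - 1) * f 2 + (k : ℝ) * f 1 + f (k : ℝ)
        = 2 * a ^ 2 * (n : ℝ) + (k : ℝ) * a ^ k - (2 * a - 1) * a * (k : ℝ) - 2 * a ^ 2 := by
      rw [hf1, hf2, hfm k]
      ring
    rw [hSEI, hval] at hle hiff
    exact ⟨hle, hiff.trans (by tauto)⟩
end
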